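/- (Pointwise Fisher consistency under the mean residual shift, core of Theorem 1.) Let K ≥ 2^0 be an integer, w : {−1,1}^K → ℝ, and let w̄ = 2^{−K} Σ_{a ∈ {−1,1}^K} w(a) be the average weight. Suppose w attains its maximum at a unique a₀ ∈ {−1,1}^K. Then w(a₀) − w̄ > 0, and every z ∈ ℝ^K attaining the minimum of the residual-weighted conditional ψ-risk z ↦ Σ_{a ∈ {−1,1}^K} (w(a) − w̄) ψ(a ⊙ z) satisfies (a₀)_k z_k ≥ 1 for all k = 1, …, K. -/

import Mathlib

/-- `Tgen s z = max (s - z 1, ..., s - z K, 0)`, the function `T_s` from the paper. -/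
noncomputable def Tgen {K : ℕ} (s : ℝ) (z : Fin K → ℝ) : ℝ :=
  Finset.fold (· ⊔ ·) 0 (fun k => s - z k) Finset.univ

/-- The generalized ψ-loss: `ψ z = T₁ z - T₀ z`. -/
noncomputable def psiLoss {K : ℕ} (z : Fin K → ℝ) : ℝ :=
  Tgen 1 z - Tgen 0 z

open scoped Classical in
/-- The set of sign vectors `{-1, 1}^K`, as a finset of `Fin K → ℝ`. -/
noncomputable def signVecs (K : ℕ) : Finset (Fin K → ℝ) :=
  Finset.image (fun (b : Fin K → Bool) (k : Fin K) => if b k then (1 : ℝ) else -1)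
    Finset.univ

lemma mem_signVecs {K : ℕ} (a : Fin K → ℝ) :
    a ∈ signVecs K ↔ ∀ k, a k = 1 ∨ a k = -1 := by
  classical
  unfold signVecs
  constructor
  · intro h k
    rw [Finset.mem_image] at h
    obtain ⟨b, -, rfl⟩ := h
    by_cases hb : b k <;> simp [hb]
  · intro h
    rw [Finset.mem_image]
    refine ⟨fun k => decide (a k = 1), Finset.mem_univ _, ?_⟩
    funext k
    rcases h k with h1 | h1 <;> norm_num [h1]

lemma signVecs_nonempty (K : ℕ) : (signVecs K).Nonempty :=
  ⟨fun _ => 1, (mem_signVecs _).mpr fun _ => Or.inl rfl⟩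

lemma tgen_eq_fold {K : ℕ} (s : ℝ) (z : Fin K → ℝ) :
    Tgen s z = Finset.fold max 0 (fun k => s - z k) Finset.univ := rfl

lemma tgen_le {K : ℕ} {s c : ℝ} {z : Fin K → ℝ} (h0 : 0 ≤ c) (h : ∀ k, s - z k ≤ c) :
    Tgen s z ≤ c := by
  rw [tgen_eq_fold]
  exact (Finset.fold_max_le (c := c)).mpr ⟨h0, fun k _ => h k⟩

lemma tgen_nonneg {K : ℕ} (s : ℝ) (z : Fin K → ℝ) : 0 ≤ Tgen s z := by
  rw [tgen_eq_fold]
  exact (Finset.le_fold_max 0).mpr (Or.inl le_rfl)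

lemma le_tgen {K : ℕ} (s : ℝ) (z : Fin K → ℝ) (k : Fin K) : s - z k ≤ Tgen s z := by
  rw [tgen_eq_fold]
  exact (Finset.le_fold_max _).mpr (Or.inr ⟨k, Finset.mem_univ k, le_rfl⟩)

lemma psi_nonneg {K : ℕ} (z : Fin K → ℝ) : 0 ≤ psiLoss z := by
  have h : Tgen 0 z ≤ Tgen 1 z := by
    refine tgen_le (tgen_nonneg _ _) fun k => ?_
    have := le_tgen 1 z k
    linarith
  unfold psiLoss; linarith

lemma psi_le_one {K : ℕ} (z : Fin K → ℝ) : psiLoss z ≤ 1 := by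
  have h : Tgen 1 z ≤ Tgen 0 z + 1 := by
    refine tgen_le (by linarith [tgen_nonneg 0 z]) fun k => ?_
    have := le_tgen 0 z k
    linarith
  unfold psiLoss; linarith

lemma one_le_psi {K : ℕ} (z : Fin K → ℝ) (k : Fin K) (hk : z k ≤ 0) : 1 ≤ psiLoss z := by
  have h1 : (1 : ℝ) ≤ Tgen 1 z := by
    have := le_tgen 1 z k; linarith
  have h : Tgen 0 z ≤ Tgen 1 z - 1 := by
    refine tgen_le (by linarith) fun j => ?_
    have := le_tgen 1 z j
    linarith
  unfold psiLoss; linarith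

lemma psi_pos_coords {K : ℕ} (z : Fin K → ℝ) (h : psiLoss z < 1) : ∀ k, 0 < z k := by
  intro k
  by_contra hk
  push_neg at hk
  exact absurd (one_le_psi z k hk) (not_le.mpr h)

lemma psi_coords_ge_one {K : ℕ} (z : Fin K → ℝ) (h1 : psiLoss z < 1) (h0 : psiLoss z ≤ 0) :
    ∀ k, 1 ≤ z k := by
  have hpos := psi_pos_coords z h1
  have ht0 : Tgen 0 z = 0 :=
    le_antisymm (tgen_le le_rfl fun k => by linarith [hpos k]) (tgen_nonneg _ _)
  intro k
  have := le_tgen 1 z k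
  unfold psiLoss at h0
  rw [ht0] at h0
  linarith

lemma psi_ones {K : ℕ} : psiLoss (fun _ : Fin K => (1 : ℝ)) = 0 := by
  have h1 : Tgen 1 (fun _ : Fin K => (1 : ℝ)) = 0 :=
    le_antisymm (tgen_le le_rfl fun k => by norm_num) (tgen_nonneg _ _)
  have h0 : Tgen 0 (fun _ : Fin K => (1 : ℝ)) = 0 :=
    le_antisymm (tgen_le le_rfl fun k => by norm_num) (tgen_nonneg _ _)
  unfold psiLoss; rw [h0, h1]; ring

lemma card_signVecs (K : ℕ) : (signVecs K).card = 2 ^ K := by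
  classical
  unfold signVecs
  rw [Finset.card_image_of_injective]
  · simp [Finset.card_univ]
  · intro b1 b2 h
    funext k
    have hk := congrFun h k
    cases hb1 : b1 k <;> cases hb2 : b2 k <;> simp [hb1, hb2] at hk ⊢ <;> norm_num at hk

theorem stmt13 (K : ℕ) (hK : 1 ≤ K) (w : (Fin K → ℝ) → ℝ) (wbar : ℝ)
    (hwbar : wbar = (∑ a ∈ signVecs K, w a) / 2 ^ K)
    (a₀ : Fin K → ℝ) (ha₀ : a₀ ∈ signVecs K)
    (hmax : ∀ a ∈ signVecs K, a ≠ a₀ → w a < w a₀) :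
    0 < w a₀ - wbar
      ∧ ∀ z : Fin K → ℝ,
          (∀ y : Fin K → ℝ,
            ∑ a ∈ signVecs K, (w a - wbar) * psiLoss (fun k => a k * z k)
              ≤ ∑ a ∈ signVecs K, (w a - wbar) * psiLoss (fun k => a k * y k)) →
          ∀ k, 1 ≤ a₀ k * z k := by
  classical
  set S := signVecs K with hS
  set c : (Fin K → ℝ) → ℝ := fun a => w a - wbar with hc
  -- sum of residual weights is zero
  have h2K : (0 : ℝ) < 2 ^ K := by positivity
  have hsum0 : ∑ a ∈ S, c a = 0 := by
    have : ∑ a ∈ S, c a = (∑ a ∈ S, w a) - S.card * wbar := by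
      rw [Finset.sum_sub_distrib, Finset.sum_const, nsmul_eq_mul]
    rw [this, card_signVecs, hwbar]
    push_cast
    field_simp
    ring
  -- the erase of a₀ is nonempty
  have herase_ne : (S.erase a₀).Nonempty := by
    rw [← Finset.card_pos, Finset.card_erase_of_mem ha₀, card_signVecs]
    have : 2 ≤ 2 ^ K := by
      calc (2 : ℕ) = 2 ^ 1 := rfl
      _ ≤ 2 ^ K := Nat.pow_le_pow_right (by norm_num) hK
    omega
  -- positivity of c a₀
  have hca₀ : 0 < c a₀ := by
    by_contra h
    push_neg at h
    have hneg : ∑ a ∈ S.erase a₀, c a < 0 := by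
      refine Finset.sum_neg (fun a ha => ?_) herase_ne
      have haS := Finset.mem_of_mem_erase ha
      have hane := Finset.ne_of_mem_erase ha
      have := hmax a haS hane
      simp only [hc] at h ⊢
      linarith
    have := Finset.sum_erase_add S c ha₀
    rw [hsum0] at this
    linarith
  refine ⟨hca₀, ?_⟩
  intro z hmin k
  -- the risk at y = a₀ equals -(c a₀)
  have ha₀pm := (mem_signVecs a₀).mp ha₀
  have hRa₀ : ∑ a ∈ S, c a * psiLoss (fun k => a k * a₀ k) = -(c a₀) := by
    have hstep : ∀ a ∈ S.erase a₀, c a * psiLoss (fun k => a k * a₀ k) = c a := by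
      intro a ha
      have haS := Finset.mem_of_mem_erase ha
      have hane := Finset.ne_of_mem_erase ha
      have hapm := (mem_signVecs a).mp haS
      obtain ⟨j, hj⟩ : ∃ j, a j ≠ a₀ j := by
        by_contra hcon
        push_neg at hcon
        exact hane (funext hcon)
      have hprod : a j * a₀ j ≤ 0 := by
        rcases hapm j with h1 | h1 <;> rcases ha₀pm j with h2 | h2 <;>
          (revert hj; norm_num [h1, h2])
      have hge := one_le_psi (fun k => a k * a₀ k) j hprod
      have hle := psi_le_one (fun k => a k * a₀ k)
      have : psiLoss (fun k => a k * a₀ k) = 1 := le_antisymm hle hge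
      rw [this, mul_one]
    have hself : psiLoss (fun k => a₀ k * a₀ k) = 0 := by
      have : (fun k => a₀ k * a₀ k) = fun _ : Fin K => (1 : ℝ) := by
        funext k
        rcases ha₀pm k with h1 | h1 <;> rw [h1] <;> norm_num
      rw [this, psi_ones]
    rw [← Finset.sum_erase_add S _ ha₀, hself, mul_zero, add_zero,
      Finset.sum_congr rfl hstep]
    have := Finset.sum_erase_add S c ha₀
    rw [hsum0] at this
    linarith
  -- the minimality hypothesis at y = a₀
  have hle : ∑ a ∈ S, c a * psiLoss (fun k => a k * z k) ≤ -(c a₀) := by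
    have := hmin a₀
    rw [hRa₀] at this
    exact this
  -- case analysis: is there b with ψ(b ⊙ z) < 1 ?
  by_cases hb : ∃ b ∈ S, psiLoss (fun k => b k * z k) < 1
  · obtain ⟨b, hbS, hblt⟩ := hb
    have hbpm := (mem_signVecs b).mp hbS
    have hpos : ∀ j, 0 < b j * z j := psi_pos_coords _ hblt
    -- all other sign vectors give ψ = 1
    have hstep : ∀ a ∈ S.erase b, c a * psiLoss (fun k => a k * z k) = c a := by
      intro a ha
      have haS := Finset.mem_of_mem_erase ha
      have hane := Finset.ne_of_mem_erase ha
      have hapm := (mem_signVecs a).mp haS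
      obtain ⟨j, hj⟩ : ∃ j, a j ≠ b j := by
        by_contra hcon
        push_neg at hcon
        exact hane (funext hcon)
      have haj : a j = -b j := by
        rcases hapm j with h1 | h1 <;> rcases hbpm j with h2 | h2 <;>
          (revert hj; norm_num [h1, h2])
      have hprod : a j * z j ≤ 0 := by
        have := hpos j
        rw [haj]
        nlinarith
      have hge := one_le_psi (fun k => a k * z k) j hprod
      have hle' := psi_le_one (fun k => a k * z k)
      have : psiLoss (fun k => a k * z k) = 1 := le_antisymm hle' hge
      rw [this, mul_one]
    set p : ℝ := psiLoss (fun k => b k * z k) with hp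
    have hRz : ∑ a ∈ S, c a * psiLoss (fun k => a k * z k) = c b * (p - 1) := by
      rw [← Finset.sum_erase_add S _ hbS, Finset.sum_congr rfl hstep]
      have := Finset.sum_erase_add S c hbS
      rw [hsum0] at this
      have hsumerase : ∑ a ∈ S.erase b, c a = -(c b) := by linarith
      rw [hsumerase]; ring
    rw [hRz] at hle
    have hp0 : 0 ≤ p := psi_nonneg _
    -- show c b > 0
    have hcb : 0 < c b := by nlinarith
    -- show b = a₀
    have hba₀ : b = a₀ := by
      by_contra hne
      have := hmax b hbS hne
      have hcblt : c b < c a₀ := by simp only [hc]; linarith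
      nlinarith
    subst hba₀
    -- show p ≤ 0
    have hp_le : p ≤ 0 := by nlinarith
    exact psi_coords_ge_one _ hblt hp_le k
  · -- all ψ = 1, risk is 0, contradicting risk ≤ -(c a₀) < 0
    push_neg at hb
    exfalso
    have hall : ∀ a ∈ S, c a * psiLoss (fun k => a k * z k) = c a := by
      intro a ha
      have := hb a ha
      have hle' := psi_le_one (fun k => a k * z k)
      have : psiLoss (fun k => a k * z k) = 1 := le_antisymm hle' this
      rw [this, mul_one]
    rw [Finset.sum_congr rfl hall, hsum0] at hle
    linarith
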